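/- Let A + λB be a 2×2 upper triangular regular complex pencil with diagonal entries a₁₁ + λb₁₁ and a₂₂ + λb₂₂. Then there exist unitary matrices U, V ∈ ℂ^{2×2} such that C + λD := U*(A + λB)V is upper triangular, the eigenvalue of the (1,1) diagonal entry of C + λD equals the eigenvalue of a₂₂ + λb₂₂ (i.e., a₂₂ d₁₁ = b₂₂ c₁₁), and the eigenvalue of the (2,2) diagonal entry equals that of a₁₁ + λb₁₁ (i.e., a₁₁ d₂₂ = b₁₁ c₂₂). -/

import Mathlib

open Polynomial Matrix

noncomputable def pencilPoly (A B : Matrix (Fin 2) (Fin 2) ℂ) :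
    Matrix (Fin 2) (Fin 2) (Polynomial ℂ) :=
  Matrix.of fun i j => C (A i j) + X * C (B i j)

lemma unitary_aux (p q : ℂ) (h : q ≠ 0) :
    (((Real.sqrt (Complex.normSq p + Complex.normSq q) : ℝ) : ℂ))⁻¹ •
      !![p, -(starRingEnd ℂ) q; q, (starRingEnd ℂ) p] ∈ Matrix.unitaryGroup (Fin 2) ℂ := by
  rw [Matrix.mem_unitaryGroup_iff]
  set n : ℝ := Real.sqrt (Complex.normSq p + Complex.normSq q) with hn
  have hpos : (0:ℝ) < Complex.normSq p + Complex.normSq q := by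
    have := Complex.normSq_pos.2 h
    have := Complex.normSq_nonneg p
    linarith
  have hnsq : (n:ℂ) * (n:ℂ) = (Complex.normSq p : ℂ) + (Complex.normSq q : ℂ) := by
    rw [← Complex.ofReal_mul, Real.mul_self_sqrt hpos.le, Complex.ofReal_add]
  have hne : (n:ℂ) ≠ 0 := by
    simp [hn, Real.sqrt_eq_zero', not_le, hpos]
  ext i j
  fin_cases i <;> fin_cases j <;>
    simp [Matrix.mul_apply, Fin.sum_univ_two, Matrix.smul_apply, Matrix.star_apply,
      Matrix.one_apply, mul_comm, mul_assoc, mul_left_comm] <;>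
    field_simp <;>
    rw [Complex.mul_conj, Complex.mul_conj, sq, hnsq] <;> ring

/-- Swapping the two diagonal eigenvalues of a `2 × 2` upper triangular regular pencil
by a unitary equivalence. -/
theorem swap_eigenvalues_2x2 (A B : Matrix (Fin 2) (Fin 2) ℂ)
    (hA : A 1 0 = 0) (hB : B 1 0 = 0)
    (hreg : (pencilPoly A B).det ≠ 0) :
    ∃ U V : Matrix (Fin 2) (Fin 2) ℂ,
      U ∈ Matrix.unitaryGroup (Fin 2) ℂ ∧ V ∈ Matrix.unitaryGroup (Fin 2) ℂ ∧
      (Uᴴ * A * V) 1 0 = 0 ∧ (Uᴴ * B * V) 1 0 = 0 ∧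
      A 1 1 * (Uᴴ * B * V) 0 0 = B 1 1 * (Uᴴ * A * V) 0 0 ∧
      A 0 0 * (Uᴴ * B * V) 1 1 = B 0 0 * (Uᴴ * A * V) 1 1 := by
  by_cases hd : A 1 1 * B 0 0 - B 1 1 * A 0 0 = 0
  · refine ⟨1, 1, Submonoid.one_mem _, Submonoid.one_mem _, ?_, ?_, ?_, ?_⟩ <;>
      simp [hA, hB] <;> first | linear_combination hd | linear_combination (-2:ℂ)*hd | linear_combination (2:ℂ)*hd | linear_combination -hd
  · set d : ℂ := A 1 1 * B 0 0 - B 1 1 * A 0 0 with hdda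
    set g : ℂ := A 1 1 * B 0 1 - B 1 1 * A 0 1 with hg
    set e : ℂ := A 0 1 * B 0 0 - A 0 0 * B 0 1 with he
    refine ⟨(((Real.sqrt (Complex.normSq e + Complex.normSq d) : ℝ) : ℂ))⁻¹ •
        !![e, -(starRingEnd ℂ) d; d, (starRingEnd ℂ) e],
      (((Real.sqrt (Complex.normSq (-g) + Complex.normSq d) : ℝ) : ℂ))⁻¹ •
        !![-g, -(starRingEnd ℂ) d; d, (starRingEnd ℂ) (-g)],
      unitary_aux e d hd, unitary_aux (-g) d hd, ?_, ?_, ?_, ?_⟩ <;>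
    · simp only [Matrix.mul_apply, Fin.sum_univ_two, Matrix.smul_apply, Matrix.conjTranspose_apply,
        Matrix.of_apply, Matrix.cons_val', Matrix.cons_val_zero, Matrix.cons_val_one,
        Matrix.head_cons, Matrix.head_fin_const, Matrix.empty_val', Matrix.cons_val_fin_one,
        smul_eq_mul, star_mul', star_inv₀, Complex.star_def, Complex.conj_ofReal, hA, hB,
        hdda, hg, he, map_sub, _root_.map_mul, map_neg, Complex.conj_conj]
      ring
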